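/- Let r > 0, let t₀ < t₁, and let u : [t₀,t₁] → ℝ be continuous with u(t) ≥ 0. Let λ : [t₀,t₁] → ℝ be a solution of the dark-phase adjoint equation λ'(t) = λ(t)·(r + u(t)) − u(t). If λ(t₀) ≥ 1, then λ(t) > 1 for all t ∈ (t₀, t₁]. In particular, the switching function 1 − λ cannot change sign from negative to positive during the dark phase, i.e. no switch of the optimal dilution from u = 0 to u = ū can occur in the dark phase (Proposition 1(i)). -/

import Mathlib

/-- Proposition 1(i): along the dark-phase adjoint dynamics
`λ' = λ·(r + u) − u` with `r > 0` and `u(t) ≥ 0`, if `λ(t₀) ≥ 1` then `λ(t) > 1`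
for all later times of the dark phase; hence no switch from `u = 0` to `u = ū`
can occur in the dark phase. -/
theorem dark_phase_adjoint_stays_above_one
    (r t₀ t₁ : ℝ) (u lam : ℝ → ℝ)
    (hr : 0 < r)
    (ht : t₀ < t₁)
    (hu_cont : ContinuousOn u (Set.Icc t₀ t₁))
    (hu_nonneg : ∀ t ∈ Set.Icc t₀ t₁, 0 ≤ u t)
    (hlam_cont : ContinuousOn lam (Set.Icc t₀ t₁))
    (hlam_deriv : ∀ t ∈ Set.Ioo t₀ t₁, HasDerivAt lam (lam t * (r + u t) - u t) t)
    (hlam0 : 1 ≤ lam t₀) :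
    ∀ t ∈ Set.Ioc t₀ t₁, 1 < lam t := by
  set f : ℝ → ℝ := fun s => r + u s with hfdef
  have hf_cont : ContinuousOn f (Set.Icc t₀ t₁) := continuousOn_const.add hu_cont
  have hf_int : MeasureTheory.IntegrableOn f (Set.uIcc t₀ t₁) := by
    rw [Set.uIcc_of_le ht.le]
    exact hf_cont.integrableOn_compact isCompact_Icc
  set U : ℝ → ℝ := fun t => ∫ s in t₀..t, f s with hUdef
  have hU_cont : ContinuousOn U (Set.Icc t₀ t₁) := by
    have := intervalIntegral.continuousOn_primitive_interval hf_int
    rwa [Set.uIcc_of_le ht.le] at this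
  have hU_deriv : ∀ t ∈ Set.Ioo t₀ t₁, HasDerivAt U (f t) t := by
    intro t htI
    have hmem : Set.Icc t₀ t₁ ∈ nhds t :=
      mem_nhds_iff.2 ⟨Set.Ioo t₀ t₁, Set.Ioo_subset_Icc_self, isOpen_Ioo, htI⟩
    have hct : ContinuousAt f t := hf_cont.continuousAt hmem
    have hint : IntervalIntegrable f MeasureTheory.volume t₀ t := by
      apply (hf_cont.mono _).intervalIntegrable
      rw [Set.uIcc_of_le htI.1.le]
      exact Set.Icc_subset_Icc le_rfl htI.2.le
    have hmeas : StronglyMeasurableAtFilter f (nhds t) :=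
      (hf_cont.mono Set.Ioo_subset_Icc_self).stronglyMeasurableAtFilter isOpen_Ioo t htI
    exact intervalIntegral.integral_hasDerivAt_right hint hmeas hct
  set φ : ℝ → ℝ := fun t => (lam t - 1) * Real.exp (-U t) with hφdef
  have hφ_cont : ContinuousOn φ (Set.Icc t₀ t₁) :=
    (hlam_cont.sub continuousOn_const).mul (hU_cont.neg.rexp)
  have hφ_deriv : ∀ t ∈ Set.Ioo t₀ t₁, HasDerivAt φ (r * Real.exp (-U t)) t := by
    intro t htI
    have h1 : HasDerivAt (fun x => (lam x - 1) * Real.exp (-U x))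
        ((lam t * (r + u t) - u t) * Real.exp (-U t) + (lam t - 1) * (Real.exp (-U t) * -f t)) t :=
      ((hlam_deriv t htI).sub_const 1).mul (((hU_deriv t htI).neg).exp)
    convert h1 using 1
    simp only [hfdef]
    ring
  have hmono : StrictMonoOn φ (Set.Icc t₀ t₁) := by
    apply strictMonoOn_of_deriv_pos (convex_Icc t₀ t₁) hφ_cont
    intro t htI
    rw [interior_Icc] at htI
    rw [(hφ_deriv t htI).deriv]
    positivity
  intro t htI
  have h0 : φ t₀ < φ t :=
    hmono (Set.left_mem_Icc.2 ht.le) ⟨htI.1.le, htI.2⟩ htI.1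
  have hstart : 0 ≤ φ t₀ := mul_nonneg (by linarith) (Real.exp_pos _).le
  have hpos : 0 < (lam t - 1) * Real.exp (-U t) := lt_of_le_of_lt hstart h0
  nlinarith [Real.exp_pos (-U t)]
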